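/- Let p/q be an irreducible fraction with 0 < p/q < 1 and p/q = [a_1,…,a_n] with a_1 ≥ 2. Then AT((q−p)/q) is the mirror image of AT(p/q): (q−p)/q = [1, a_1−1, a_2,…,a_n], both ancestral triangles consist of the same number N = a_1 + ⋯ + a_n − 1 of stacked triangles, and for every 1 ≤ i ≤ N the triangle T_i of AT((q−p)/q) is a left triangle if and only if the triangle T_i of AT(p/q) is a right triangle. -/

import Mathlib

/-!
Ancestral triangles of continued fractions (Yamada / Farey diagrams),
following "Cluster variables and Alexander polynomials of 2-bridge knots".
-/

noncomputable section

open scoped BigOperators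

attribute [local instance] Classical.propDecidable

namespace TwoBridge

/-- The continued fraction `[a₁,…,aₙ] = 1/(a₁ + 1/(a₂ + ⋯ + 1/aₙ))`. -/
def cf : List ℕ → ℚ
  | [] => 0
  | a :: t => 1 / ((a : ℚ) + cf t)

/-- Partial sums `l_k = a₁ + ⋯ + a_k`. -/
def ell (a : List ℕ) (k : ℕ) : ℕ := (a.take k).sum

/-- The index of the fan containing the `i`-th triangle (1-based): the least `k` with
`i ≤ l_k − 1`.  Fan 1 consists of `T_1, …, T_{a₁−1}` and, for `k ≥ 2`, fan `k` consists of
`T_{l_{k−1}}, …, T_{l_k − 1}`. -/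
def fanIdx (a : List ℕ) (i : ℕ) : ℕ := sInf {k | i < ell a k}

/-- The `i`-th triangle (1-based) of the ancestral triangle of `[a₁,…,aₙ]` is a *right*
triangle iff it lies in an odd-indexed fan (first `a₁ − 1` triangles are right, the next
`a₂` left, the next `a₃` right, and so on alternately). -/
def isRight (a : List ℕ) (i : ℕ) : Prop := Odd (fanIdx a i)

/-- Vertex indices of the ancestral triangle: `0 ↦ 0/1`, `1 ↦ 1/1`, and `j + 1 ↦` the apex
(new vertex) of the triangle `T_j`.  `edgeIdx a i` is the pair of vertex indices
(left endpoint, right endpoint) of the most recently created edge after stacking `i`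
triangles; the triangle `T_{i+1}` is stacked on this edge. -/
def edgeIdx (a : List ℕ) : ℕ → ℕ × ℕ
  | 0 => (0, 1)
  | i + 1 => if isRight a (i + 1) then ((edgeIdx a i).1, i + 2) else (i + 2, (edgeIdx a i).2)

/-- The labels (numerator, denominator) of the endpoints of the active edge after stacking
`i` triangles; the new vertex of each triangle is labelled by the mediant of the two
endpoints of the edge it is stacked on. -/
def edgeLbl (a : List ℕ) : ℕ → (ℕ × ℕ) × (ℕ × ℕ)
  | 0 => ((0, 1), (1, 1))
  | i + 1 =>
      if isRight a (i + 1) then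
        ((edgeLbl a i).1,
          ((edgeLbl a i).1.1 + (edgeLbl a i).2.1, (edgeLbl a i).1.2 + (edgeLbl a i).2.2))
      else
        (((edgeLbl a i).1.1 + (edgeLbl a i).2.1, (edgeLbl a i).1.2 + (edgeLbl a i).2.2),
          (edgeLbl a i).2)

/-- The label (numerator, denominator) of the vertex with index `v`. -/
def vtxLabel (a : List ℕ) (v : ℕ) : ℕ × ℕ :=
  if v = 0 then (0, 1)
  else if v = 1 then (1, 1)
  else ((edgeLbl a (v - 2)).1.1 + (edgeLbl a (v - 2)).2.1,
        (edgeLbl a (v - 2)).1.2 + (edgeLbl a (v - 2)).2.2)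

/-- `u` and `w` are joined by an edge of the ancestral triangle. -/
def IsEdgeAT (a : List ℕ) (u w : ℕ) : Prop :=
  (u = 0 ∧ w = 1) ∨ (u = 1 ∧ w = 0) ∨
    (2 ≤ u ∧ (w = (edgeIdx a (u - 2)).1 ∨ w = (edgeIdx a (u - 2)).2)) ∨
    (2 ≤ w ∧ (u = (edgeIdx a (w - 2)).1 ∨ u = (edgeIdx a (w - 2)).2))

/-- A step of a path: an edge of the ancestral triangle along which the denominator of the
vertex label strictly decreases. -/
def IsStep (a : List ℕ) (u w : ℕ) : Prop :=
  IsEdgeAT a u w ∧ (vtxLabel a w).2 < (vtxLabel a u).2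

/-- `IsPathFrom a s γ` : `γ` is a path of the ancestral triangle of `a` starting at the
vertex with index `s` and ending at `0/1` or `1/1`, the denominator of the label strictly
decreasing along every edge. -/
def IsPathFrom (a : List ℕ) (s : ℕ) (γ : List ℕ) : Prop :=
  γ.head? = some s ∧ (γ.getLast? = some 0 ∨ γ.getLast? = some 1) ∧ List.Chain' (IsStep a) γ

/-- The (indices of the) triangles cut off to the left of the path by a single step from
vertex `u` down to vertex `w`. -/
def stepLeft (a : List ℕ) (u w : ℕ) : Finset ℕ :=
  if 2 ≤ u ∧ w = (edgeIdx a (u - 2)).2 then Finset.Ioc (w - 1) (u - 1) else ∅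

/-- The set `S_γ` of (indices of) triangles lying on the left side of the path `γ`. -/
def pathLeftSet (a : List ℕ) (γ : List ℕ) : Finset ℕ :=
  (γ.zip γ.tail).foldr (fun p s => stepLeft a p.1 p.2 ∪ s) ∅


lemma ell_mirror (a1 : ℕ) (rest : List ℕ) (h2 : 2 ≤ a1) (k : ℕ) (hk : 1 ≤ k) :
    ell (1 :: (a1 - 1) :: rest) (k + 1) = ell (a1 :: rest) k := by
  obtain ⟨j, rfl⟩ := Nat.exists_eq_add_of_le hk
  simp only [ell, show 1 + j + 1 = j + 1 + 1 by omega, show 1 + j = j + 1 by omega,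
    List.take_succ_cons, List.sum_cons]
  omega

lemma fanIdx_mirror (a1 : ℕ) (rest : List ℕ) (h2 : 2 ≤ a1) (i : ℕ) (hi : 1 ≤ i)
    (hne : {k | i < ell (a1 :: rest) k}.Nonempty) :
    fanIdx (1 :: (a1 - 1) :: rest) i = fanIdx (a1 :: rest) i + 1 := by
  unfold fanIdx
  set Sa := {k | i < ell (a1 :: rest) k} with hSa
  set m := sInf Sa with hm
  have hmem : m ∈ Sa := Nat.sInf_mem hne
  have hm1 : 1 ≤ m := by
    by_contra h
    have : m = 0 := by omega
    rw [this] at hmem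
    simp [hSa, ell] at hmem
  have hbmem : m + 1 ∈ {k | i < ell (1 :: (a1 - 1) :: rest) k} := by
    simpa [Set.mem_setOf_eq, ell_mirror a1 rest h2 m hm1] using (show i < ell (a1 :: rest) m from hmem)
  apply le_antisymm
  · exact Nat.sInf_le hbmem
  · have hj : sInf {k | i < ell (1 :: (a1 - 1) :: rest) k}
        ∈ {k | i < ell (1 :: (a1 - 1) :: rest) k} := Nat.sInf_mem ⟨m + 1, hbmem⟩
    set j := sInf {k | i < ell (1 :: (a1 - 1) :: rest) k} with hjdef
    have hj2 : 2 ≤ j := by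
      rcases Nat.lt_or_ge j 2 with h | h
      · exfalso
        have hj' : i < ell (1 :: (a1 - 1) :: rest) j := hj
        interval_cases j
        · simp [ell] at hj'
        · simp [ell] at hj'
          omega
      · exact h
    have : i < ell (a1 :: rest) (j - 1) := by
      have := ell_mirror a1 rest h2 (j - 1) (by omega)
      rw [show j - 1 + 1 = j by omega] at this
      rw [← this]
      exact hj
    have : m ≤ j - 1 := Nat.sInf_le this
    omega

/-- **Proposition (mirror image).**  Let `p/q` be an irreducible fraction with
`0 < p/q < 1` and `p/q = [a₁,…,aₙ]` with `a₁ ≥ 2`.  Then `AT((q−p)/q)` is the mirror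
image of `AT(p/q)`: `(q−p)/q = [1, a₁−1, a₂,…,aₙ]`, both ancestral triangles consist of
the same number `N = a₁ + ⋯ + aₙ − 1` of stacked triangles, and for every `1 ≤ i ≤ N` the
triangle `T_i` of `AT((q−p)/q)` is a left triangle iff the triangle `T_i` of `AT(p/q)` is
a right triangle. -/
theorem mirror_ancestral_triangle (a1 : ℕ) (rest : List ℕ) (p q : ℕ)
    (h2 : 2 ≤ a1) (hpos : ∀ x ∈ rest, 0 < x)
    (hp : 0 < p) (hlt : p < q) (hcop : Nat.Coprime p q)
    (hval : cf (a1 :: rest) = (p : ℚ) / q) :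
    cf (1 :: (a1 - 1) :: rest) = ((q : ℚ) - (p : ℚ)) / q ∧
    (1 :: (a1 - 1) :: rest).sum - 1 = (a1 :: rest).sum - 1 ∧
    ∀ i, 1 ≤ i → i ≤ (a1 :: rest).sum - 1 →
      (¬ isRight (1 :: (a1 - 1) :: rest) i ↔ isRight (a1 :: rest) i) := by
  have hq : 0 < q := lt_trans hp hlt
  have hqQ : (q : ℚ) ≠ 0 := by positivity
  have hpQ : (p : ℚ) ≠ 0 := by positivity
  set x := cf rest with hx
  rw [cf, ← hx] at hval
  have hy : (a1 : ℚ) + x ≠ 0 := by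
    intro h
    have h0 : (p : ℚ) / q = 0 := by rw [← hval, h]; simp
    rcases div_eq_zero_iff.mp h0 with h' | h'
    · exact hpQ h'
    · exact hqQ h'
  have hyval : ((a1 : ℚ) + x) = q / p := by
    field_simp at hval ⊢
    linear_combination -hval
  have hy1 : (a1 : ℚ) + x - 1 = ((q : ℚ) - p) / p := by
    rw [hyval]; field_simp
  have hqp : (q : ℚ) - p ≠ 0 := by
    have : (p : ℚ) < q := by exact_mod_cast hlt
    intro h; linarith
  refine ⟨?_, ?_, ?_⟩
  · show (1 : ℚ) / (1 + cf ((a1 - 1) :: rest)) = ((q : ℚ) - p) / q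
    rw [cf, ← hx]
    have hcast : ((a1 - 1 : ℕ) : ℚ) = (a1 : ℚ) - 1 := by
      push_cast [Nat.cast_sub (by omega : 1 ≤ a1)]; ring
    rw [hcast]
    rw [show (a1 : ℚ) - 1 + x = (a1 : ℚ) + x - 1 by ring, hy1]
    rw [one_div_div]
    have hden : (1 : ℚ) + p / ((q:ℚ) - p) = q / ((q:ℚ) - p) := by
      field_simp; ring
    rw [hden, one_div_div]
  · simp only [List.sum_cons]; omega
  · intro i hi hiN
    have hne : {k | i < ell (a1 :: rest) k}.Nonempty := by
      refine ⟨rest.length + 1, ?_⟩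
      have htk : List.take (rest.length + 1) (a1 :: rest) = a1 :: rest := by
        simp
      simp only [Set.mem_setOf_eq, ell, htk, List.sum_cons]
      simp only [List.sum_cons] at hiN
      omega
    have hf := fanIdx_mirror a1 rest h2 i hi hne
    unfold isRight
    rw [hf]
    rw [Nat.odd_add_one, not_not]

end TwoBridge

end
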